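/- Let N ≥ 1, let ‖·‖ be a norm on ℝ^N, let M ⊆ ℝ^N be a bounded set, r > 0, and let η : ℝ^N → [0,∞) be a continuously differentiable function with compact support contained in the closed Euclidean ball B(0,r) and ∫_{ℝ^N} η(x) dx = 1. For a Lipschitz function f : M → ℝ define f_r(x) = ∫_{ℝ^N} η(x − y)·f(y) dy for x ∈ M(r), where M(r) = {x ∈ ℝ^N : d₂(x, ℝ^N \ M) > r}. Then f_r is differentiable at every point of the open set M(r), and for every ε > 0 there exists δ > 0 (depending only on ε, M, N and η, not on f) such that for every Lipschitz f : M → ℝ, every x ∈ M(r) and every h ∈ ℝ^N with ‖h‖ ≤ δ and x + h ∈ M(r), one has |f_r(x + h) − f_r(x) − Df_r(x)[h]| ≤ ε·Lip(f)·‖h‖. -/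

import Mathlib

open MeasureTheory Metric

section Aux
variable {N : ℕ}
local notation "E" => EuclideanSpace ℝ (Fin N)

lemma aux_nn_nonneg (nn : E → ℝ)
    (nn_add : ∀ x y, nn (x + y) ≤ nn x + nn y)
    (nn_smul : ∀ (a : ℝ) (x : E), nn (a • x) = |a| * nn x) :
    ∀ x, 0 ≤ nn x := by
  intro x
  have h0 : nn 0 = 0 := by
    have := nn_smul 0 0; simpa using this
  have hneg : nn (-x) = nn x := by
    have := nn_smul (-1) x; simpa using this
  have := nn_add x (-x)
  simp [h0, hneg] at this
  linarith

lemma aux_nn_abs_sub (nn : E → ℝ)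
    (nn_add : ∀ x y, nn (x + y) ≤ nn x + nn y)
    (nn_smul : ∀ (a : ℝ) (x : E), nn (a • x) = |a| * nn x) :
    ∀ a b, |nn a - nn b| ≤ nn (a - b) := by
  intro a b
  have h1 : nn a - nn b ≤ nn (a - b) := by
    have := nn_add (a - b) b; simp at this; linarith
  have hs : nn (b - a) = nn (a - b) := by
    have := nn_smul (-1) (a - b); simpa [neg_sub] using this
  have h2 : nn b - nn a ≤ nn (a - b) := by
    have := nn_add (b - a) a; simp at this; linarith
  exact abs_le.2 ⟨by linarith, by linarith⟩

lemma aux_nn_upper (nn : E → ℝ)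
    (nn_add : ∀ x y, nn (x + y) ≤ nn x + nn y)
    (nn_smul : ∀ (a : ℝ) (x : E), nn (a • x) = |a| * nn x) :
    ∃ C : ℝ, 0 < C ∧ ∀ x, nn x ≤ C * ‖x‖ := by
  have h0 : nn 0 = 0 := by have := nn_smul 0 0; simpa using this
  set b := EuclideanSpace.basisFun (Fin N) ℝ with hb
  refine ⟨(∑ i, nn (b i)) + 1, ?_, ?_⟩
  · have : 0 ≤ ∑ i, nn (b i) :=
      Finset.sum_nonneg fun i _ => aux_nn_nonneg nn nn_add nn_smul _
    linarith
  intro x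
  have hx : x = ∑ i, x i • (b i : E) := by
    have := b.sum_repr x
    simp only [EuclideanSpace.basisFun_repr] at this
    exact this.symm
  have h1 : nn x ≤ ∑ i, nn (x i • (b i : E)) := by
    conv_lhs => rw [hx]
    exact Finset.le_sum_of_subadditive nn h0.le nn_add _ _
  have h2 : ∀ i : Fin N, nn (x i • (b i : E)) ≤ nn (b i) * ‖x‖ := by
    intro i
    rw [nn_smul]
    have hxi : |x i| ≤ ‖x‖ := by
      rw [EuclideanSpace.norm_eq]
      rw [show |x i| = Real.sqrt ((x i)^2) from (Real.sqrt_sq_eq_abs _).symm]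
      apply Real.sqrt_le_sqrt
      rw [show (x i)^2 = ‖x i‖^2 by simp [Real.norm_eq_abs, sq_abs]]
      exact Finset.single_le_sum (f := fun i => ‖x i‖^2) (fun j _ => by positivity)
        (Finset.mem_univ i)
    calc |x i| * nn (b i) ≤ ‖x‖ * nn (b i) :=
          mul_le_mul_of_nonneg_right hxi (aux_nn_nonneg nn nn_add nn_smul _)
      _ = nn (b i) * ‖x‖ := mul_comm _ _
  calc nn x ≤ ∑ i, nn (x i • (b i : E)) := h1
    _ ≤ ∑ i, nn (b i) * ‖x‖ := Finset.sum_le_sum fun i _ => h2 i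
    _ = (∑ i, nn (b i)) * ‖x‖ := by rw [Finset.sum_mul]
    _ ≤ ((∑ i, nn (b i)) + 1) * ‖x‖ := by nlinarith [norm_nonneg x]

lemma aux_nn_lower (hN : 1 ≤ N) (nn : E → ℝ)
    (nn_add : ∀ x y, nn (x + y) ≤ nn x + nn y)
    (nn_smul : ∀ (a : ℝ) (x : E), nn (a • x) = |a| * nn x)
    (nn_eq_zero : ∀ x, nn x = 0 ↔ x = 0) :
    ∃ c : ℝ, 0 < c ∧ ∀ x, c * ‖x‖ ≤ nn x := by
  obtain ⟨C, hC, hCle⟩ := aux_nn_upper nn nn_add nn_smul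
  have hnncont : Continuous nn := by
    refine LipschitzWith.continuous (K := ⟨C, hC.le⟩) ?_
    apply LipschitzWith.of_dist_le_mul
    intro a b
    rw [Real.dist_eq, dist_eq_norm]
    calc |nn a - nn b| ≤ nn (a - b) := aux_nn_abs_sub nn nn_add nn_smul a b
      _ ≤ C * ‖a - b‖ := hCle _
  haveI : Nontrivial (EuclideanSpace ℝ (Fin N)) := by
    refine ⟨EuclideanSpace.single ⟨0, hN⟩ (1:ℝ), 0, ?_⟩
    intro hcon
    have := congrArg (fun v : E => v ⟨0, hN⟩) hcon
    simp [EuclideanSpace.single_apply] at this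
  have hne : (sphere (0:E) 1).Nonempty := NormedSpace.sphere_nonempty.mpr zero_le_one
  obtain ⟨z, hz, hzmin⟩ := (isCompact_sphere (0:E) 1).exists_isMinOn hne hnncont.continuousOn
  have hznz : z ≠ 0 := by
    intro hcon
    rw [hcon] at hz; simp at hz
  have hc : 0 < nn z := by
    rcases lt_or_eq_of_le (aux_nn_nonneg nn nn_add nn_smul z) with h | h
    · exact h
    · exact absurd ((nn_eq_zero z).mp h.symm) hznz
  refine ⟨nn z, hc, fun x => ?_⟩
  rcases eq_or_ne x 0 with rfl | hx
  · simp [(nn_eq_zero (0:E)).mpr rfl, aux_nn_nonneg]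
  · have hxn : (0:ℝ) < ‖x‖ := norm_pos_iff.mpr hx
    have hmem : ‖x‖⁻¹ • x ∈ sphere (0:E) 1 := by
      simp [norm_smul, abs_of_pos (inv_pos.mpr hxn), inv_mul_cancel₀ hxn.ne']
    have := hzmin hmem
    have hval : nn (‖x‖⁻¹ • x) = ‖x‖⁻¹ * nn x := by
      rw [nn_smul, abs_of_pos (inv_pos.mpr hxn)]
    simp only [Set.mem_setOf_eq, hval] at this
    calc nn z * ‖x‖ ≤ (‖x‖⁻¹ * nn x) * ‖x‖ :=
          mul_le_mul_of_nonneg_right this hxn.le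
      _ = nn x := by field_simp

lemma aux_taylor {η : E → ℝ} (hηC1 : ContDiff ℝ 1 η) {ε' δ' : ℝ}
    (hω : ∀ a b : E, dist a b ≤ δ' → ‖fderiv ℝ η a - fderiv ℝ η b‖ ≤ ε') :
    ∀ (z h : E), ‖h‖ ≤ δ' → |η (z + h) - η z - fderiv ℝ η z h| ≤ ε' * ‖h‖ := by
  intro z h hh
  have hdiff : Differentiable ℝ η := hηC1.differentiable one_ne_zero
  set g : E → ℝ := fun w => η w - fderiv ℝ η z w with hg
  have key : ‖g (z + h) - g z‖ ≤ ε' * ‖(z + h) - z‖ := by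
    apply Convex.norm_image_sub_le_of_norm_hasFDerivWithin_le
      (f' := fun w => fderiv ℝ η w - fderiv ℝ η z)
      (s := closedBall z ‖h‖) ?_ ?_ (convex_closedBall _ _) ?_ ?_
    · intro w _
      exact ((hdiff w).hasFDerivAt.sub ((fderiv ℝ η z).hasFDerivAt)).hasFDerivWithinAt
    · intro w hw
      exact hω w z (le_trans (mem_closedBall.mp hw) hh)
    · exact mem_closedBall_self (norm_nonneg _)
    · simp [mem_closedBall, dist_eq_norm]
  have h2 : g (z + h) - g z = η (z + h) - η z - fderiv ℝ η z h := by
    simp only [hg]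
    have : fderiv ℝ η z (z + h) - fderiv ℝ η z z = fderiv ℝ η z h := by
      rw [← ContinuousLinearMap.map_sub]
      congr 1
      abel
    linarith [this]
  rw [h2] at key
  simpa using key

lemma aux_int_fderiv_zero {η : E → ℝ} (hηC1 : ContDiff ℝ 1 η)
    (hηcpt : HasCompactSupport η) (h : E) :
    ∫ t : E, fderiv ℝ η t h = 0 := by
  set L := ContinuousLinearMap.mul ℝ ℝ with hL
  have hloc : LocallyIntegrable (fun _ : E => (1:ℝ)) volume :=
    continuous_const.locallyIntegrable
  set P := L.precompL (EuclideanSpace ℝ (Fin N)) with hP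
  have h1 : HasFDerivAt (convolution η (fun _ => (1:ℝ)) L volume)
      (convolution (fderiv ℝ η) (fun _ => (1:ℝ)) P volume 0) 0 :=
    hηcpt.hasFDerivAt_convolution_left L hηC1 hloc 0
  have hconst : convolution η (fun _ => (1:ℝ)) L volume = fun _ => ∫ t : E, η t := by
    funext z
    rw [convolution_def]
    simp [hL]
  rw [hconst] at h1
  have h2 : HasFDerivAt (fun _ : E => ∫ t : E, η t) (0 : (EuclideanSpace ℝ (Fin N)) →L[ℝ] ℝ) 0 :=
    hasFDerivAt_const _ _
  have hD : convolution (fderiv ℝ η) (fun _ => (1:ℝ)) P volume 0 = 0 :=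
    h1.unique h2
  have hint : Integrable (fun t : E => P (fderiv ℝ η t) (1:ℝ)) volume := by
    apply Continuous.integrable_of_hasCompactSupport
    · exact ((P.continuous.comp (hηC1.continuous_fderiv one_ne_zero)).clm_apply continuous_const)
    · apply HasCompactSupport.comp_left (g := fun u : (EuclideanSpace ℝ (Fin N)) →L[ℝ] ℝ =>
        P u (1:ℝ)) (hηcpt.fderiv ℝ)
      simp
  have h3 : (convolution (fderiv ℝ η) (fun _ => (1:ℝ)) P volume 0) h
      = ∫ t : E, fderiv ℝ η t h := by
    rw [convolution_def]
    rw [ContinuousLinearMap.integral_apply]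
    · apply integral_congr_ae
      filter_upwards with t
      simp [hP, ContinuousLinearMap.precompL_apply, hL]
    · simpa using hint
  rw [hD] at h3
  simp at h3
  exact h3.symm

lemma aux_key {r : ℝ} (hr : 0 < r) {η : E → ℝ} (hηC1 : ContDiff ℝ 1 η)
    (hηcpt : HasCompactSupport η) (hηsupp : tsupport η ⊆ closedBall 0 r)
    {ε'' : ℝ} (hε'' : 0 < ε'') :
    ∃ δ' : ℝ, 0 < δ' ∧ δ' ≤ 1 ∧ ∀ (K : ℝ), 0 ≤ K → ∀ (F : E → ℝ), Continuous F →
      (∀ a b, |F a - F b| ≤ K * ‖a - b‖) →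
      ∀ x h : E, ‖h‖ ≤ δ' →
      |(∫ y, η (x + h - y) * F y) - (∫ y, η (x - y) * F y) -
          ∫ y, fderiv ℝ η (x - y) h * F y|
        ≤ ε'' * ‖h‖ * (K * (r + 1)) * (volume (closedBall (0:E) (r+1))).toReal := by
  have hηcont : Continuous η := hηC1.continuous
  have hDcont : Continuous (fderiv ℝ η) := hηC1.continuous_fderiv one_ne_zero
  have hUC : UniformContinuous (fderiv ℝ η) :=
    hDcont.uniformContinuous_of_tendsto_cocompact ((hηcpt.fderiv ℝ).is_zero_at_infty)
  obtain ⟨δ₀, hδ₀, hδ₀le⟩ := Metric.uniformContinuous_iff.mp hUC ε'' hε''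
  refine ⟨min (δ₀/2) 1, by positivity, min_le_right _ _, ?_⟩
  intro K hK F hFcont hF x h hh
  have hh1 : ‖h‖ ≤ 1 := hh.trans (min_le_right _ _)
  have hω : ∀ a b : E, dist a b ≤ min (δ₀/2) 1 → ‖fderiv ℝ η a - fderiv ℝ η b‖ ≤ ε'' := by
    intro a b hab
    have : dist a b < δ₀ := lt_of_le_of_lt (hab.trans (min_le_left _ _)) (by linarith)
    have := hδ₀le this
    rw [dist_eq_norm] at this
    exact this.le
  -- the bracket
  set b : E → ℝ := fun y => η (x + h - y) - η (x - y) - fderiv ℝ η (x - y) h with hbdef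
  -- vanishing of η-terms outside balls
  have hvan1 : ∀ y : E, y ∉ closedBall x (r + 1) → η (x + h - y) = 0 := by
    intro y hy
    apply image_eq_zero_of_notMem_tsupport
    intro hmem
    apply hy
    have := hηsupp hmem
    rw [mem_closedBall] at this ⊢
    rw [dist_zero_right] at this
    have : dist y x ≤ ‖x + h - y‖ + ‖h‖ := by
      rw [dist_comm, dist_eq_norm]
      calc ‖x - y‖ = ‖(x + h - y) + (-h)‖ := by congr 1; abel
        _ ≤ ‖x + h - y‖ + ‖-h‖ := norm_add_le _ _
        _ = ‖x + h - y‖ + ‖h‖ := by rw [norm_neg]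
    linarith
  have hvan2 : ∀ y : E, y ∉ closedBall x (r + 1) → η (x - y) = 0 := by
    intro y hy
    apply image_eq_zero_of_notMem_tsupport
    intro hmem
    apply hy
    have := hηsupp hmem
    rw [mem_closedBall] at this ⊢
    rw [dist_zero_right] at this
    rw [dist_comm, dist_eq_norm]
    linarith
  have hvan3 : ∀ y : E, y ∉ closedBall x (r + 1) → fderiv ℝ η (x - y) = 0 := by
    intro y hy
    by_contra hne
    have hmem : x - y ∈ Function.support (fderiv ℝ η) := hne
    have := hηsupp (support_fderiv_subset ℝ hmem)
    rw [mem_closedBall, dist_zero_right] at this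
    apply hy
    rw [mem_closedBall, dist_comm, dist_eq_norm]
    linarith
  -- integrability
  have hFor : ∀ (g : E → ℝ), Continuous g → (∀ y ∉ closedBall x (r+1), g y = 0) →
      Integrable g volume := by
    intro g hg hgv
    exact hg.integrable_of_hasCompactSupport
      (HasCompactSupport.intro (isCompact_closedBall _ _) hgv)
  have hcont3 : Continuous (fun y : E => fderiv ℝ η (x - y) h) :=
    (hDcont.comp (continuous_const.sub continuous_id)).clm_apply continuous_const
  have i1 : Integrable (fun y : E => η (x + h - y) * F y) volume :=
    hFor _ ((hηcont.comp (continuous_const.sub continuous_id)).mul hFcont)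
      (fun y hy => by rw [hvan1 y hy, zero_mul])
  have i2 : Integrable (fun y : E => η (x - y) * F y) volume :=
    hFor _ ((hηcont.comp (continuous_const.sub continuous_id)).mul hFcont)
      (fun y hy => by rw [hvan2 y hy, zero_mul])
  have i3 : Integrable (fun y : E => fderiv ℝ η (x - y) h * F y) volume :=
    hFor _ (hcont3.mul hFcont)
      (fun y hy => by rw [hvan3 y hy]; simp)
  have i4 : Integrable (fun y : E => η (x + h - y)) volume :=
    hFor _ (hηcont.comp (continuous_const.sub continuous_id))
      (fun y hy => hvan1 y hy)
  have i5 : Integrable (fun y : E => η (x - y)) volume :=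
    hFor _ (hηcont.comp (continuous_const.sub continuous_id))
      (fun y hy => hvan2 y hy)
  have i6 : Integrable (fun y : E => fderiv ℝ η (x - y) h) volume :=
    hFor _ hcont3 (fun y hy => by rw [hvan3 y hy]; simp)
  -- ∫ b = 0
  have e4 : ∫ y : E, η (x + h - y) = ∫ t : E, η t := integral_sub_left_eq_self η volume (x + h)
  have e5 : ∫ y : E, η (x - y) = ∫ t : E, η t := integral_sub_left_eq_self η volume x
  have e6 : ∫ y : E, fderiv ℝ η (x - y) h = 0 := by
    rw [integral_sub_left_eq_self (fun t : E => fderiv ℝ η t h) volume x]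
    exact aux_int_fderiv_zero hηC1 hηcpt h
  have i45 : Integrable (fun y : E => η (x + h - y) - η (x - y)) volume := i4.sub i5
  have hbint : Integrable b volume := i45.sub i6
  have hbzero : ∫ y, b y = 0 := by
    have A : ∫ y : E, (η (x + h - y) - η (x - y)) =
        (∫ y : E, η (x + h - y)) - ∫ y : E, η (x - y) := integral_sub i4 i5
    have B : ∫ y : E, (η (x + h - y) - η (x - y) - fderiv ℝ η (x - y) h) =
        (∫ y : E, (η (x + h - y) - η (x - y))) - ∫ y : E, fderiv ℝ η (x - y) h :=
      integral_sub i45 i6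
    simp only [hbdef]
    rw [B, A, e4, e5, e6]
    ring
  have hbFint : Integrable (fun y => b y * F y) volume := by
    have : (fun y => b y * F y) =
        fun y => η (x + h - y) * F y - η (x - y) * F y - fderiv ℝ η (x - y) h * F y := by
      funext y; simp only [hbdef]; ring
    rw [this]
    exact (i1.sub i2).sub i3
  have hLHS : (∫ y, η (x + h - y) * F y) - (∫ y, η (x - y) * F y) -
      (∫ y, fderiv ℝ η (x - y) h * F y) = ∫ y, b y * (F y - F x) := by
    have h1 : ∫ y, b y * (F y - F x) = (∫ y, b y * F y) - F x * ∫ y, b y := by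
      have heq : (fun y => b y * (F y - F x)) = fun y => b y * F y - F x * b y := by
        funext y; ring
      have h1a : ∫ y : E, (b y * F y - F x * b y) =
          (∫ y : E, b y * F y) - ∫ y : E, F x * b y :=
        integral_sub hbFint (hbint.const_mul (F x))
      rw [heq, h1a, MeasureTheory.integral_const_mul]
    have i12 : Integrable (fun y : E => η (x + h - y) * F y - η (x - y) * F y) volume :=
      i1.sub i2
    have h2 : ∫ y, b y * F y =
        (∫ y, η (x + h - y) * F y) - (∫ y, η (x - y) * F y) -
          (∫ y, fderiv ℝ η (x - y) h * F y) := by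
      have heq : (fun y => b y * F y) =
          fun y => (η (x + h - y) * F y - η (x - y) * F y) - fderiv ℝ η (x - y) h * F y := by
        funext y; simp only [hbdef]; ring
      have hA : ∫ y : E, ((η (x + h - y) * F y - η (x - y) * F y) - fderiv ℝ η (x - y) h * F y) =
          (∫ y : E, (η (x + h - y) * F y - η (x - y) * F y)) -
            ∫ y : E, fderiv ℝ η (x - y) h * F y := integral_sub i12 i3
      have hB : ∫ y : E, (η (x + h - y) * F y - η (x - y) * F y) =
          (∫ y : E, η (x + h - y) * F y) - ∫ y : E, η (x - y) * F y := integral_sub i1 i2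
      rw [heq, hA, hB]
    rw [h1, hbzero, h2]
    ring
  rw [hLHS]
  -- pointwise bound on the bracket
  have hbbound : ∀ y : E, |b y| ≤ ε'' * ‖h‖ := by
    intro y
    have : b y = η ((x - y) + h) - η (x - y) - fderiv ℝ η (x - y) h := by
      simp only [hbdef]
      congr 3
      abel
    rw [this]
    exact aux_taylor hηC1 hω (x - y) h hh
  -- the integrand vanishes outside the ball
  have hvb : ∀ y ∉ closedBall x (r + 1), b y * (F y - F x) = 0 := by
    intro y hy
    simp only [hbdef]
    rw [hvan1 y hy, hvan2 y hy, hvan3 y hy]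
    simp
  have hsub : ∫ y, b y * (F y - F x) = ∫ y in closedBall x (r+1), b y * (F y - F x) :=
    (setIntegral_eq_integral_of_forall_compl_eq_zero hvb).symm
  rw [hsub]
  have hbnd : ∀ y ∈ closedBall x (r + 1), ‖b y * (F y - F x)‖ ≤ ε'' * ‖h‖ * (K * (r+1)) := by
    intro y hy
    rw [norm_mul]
    apply mul_le_mul (hbbound y) _ (norm_nonneg _) (by positivity)
    calc ‖F y - F x‖ = |F y - F x| := rfl
      _ ≤ K * ‖y - x‖ := hF y x
      _ ≤ K * (r + 1) := by
          apply mul_le_mul_of_nonneg_left _ hK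
          rw [← dist_eq_norm]
          exact mem_closedBall.mp hy
  have hbF2 : Integrable (fun y => b y * (F y - F x)) volume := by
    have heq : (fun y => b y * (F y - F x)) = fun y => b y * F y - F x * b y := by
      funext y; ring
    rw [heq]
    exact hbFint.sub (hbint.const_mul (F x))
  have hkey := norm_setIntegral_le_of_norm_le_const (μ := volume)
    (s := closedBall x (r+1)) measure_closedBall_lt_top hbnd
  rw [Real.norm_eq_abs] at hkey
  calc |∫ y in closedBall x (r+1), b y * (F y - F x)|
      ≤ ε'' * ‖h‖ * (K * (r+1)) * (volume (closedBall x (r+1))).toReal := hkey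
    _ = ε'' * ‖h‖ * (K * (r + 1)) * (volume (closedBall (0:E) (r+1))).toReal := by
        rw [Measure.addHaar_closedBall_center]

end Aux

/-- Differentiability of the mollification `f_r(x) = ∫ η(x-y) f(y) dy` on `M(r)`, with a
modulus of uniform differentiability independent of the Lipschitz function `f`. -/
theorem statement13 {N : ℕ} (hN : 1 ≤ N)
    (nn : EuclideanSpace ℝ (Fin N) → ℝ)
    (nn_add : ∀ x y, nn (x + y) ≤ nn x + nn y)
    (nn_smul : ∀ (a : ℝ) (x : EuclideanSpace ℝ (Fin N)), nn (a • x) = |a| * nn x)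
    (nn_eq_zero : ∀ x, nn x = 0 ↔ x = 0)
    (M : Set (EuclideanSpace ℝ (Fin N))) (hM : Bornology.IsBounded M)
    (r : ℝ) (hr : 0 < r)
    (η : EuclideanSpace ℝ (Fin N) → ℝ) (hη0 : ∀ x, 0 ≤ η x)
    (hηC1 : ContDiff ℝ 1 η)
    (hηcpt : HasCompactSupport η)
    (hηsupp : tsupport η ⊆ Metric.closedBall 0 r)
    (hηone : ∫ x, η x = 1)
    (Mr : Set (EuclideanSpace ℝ (Fin N)))
    (hMr : Mr = {z : EuclideanSpace ℝ (Fin N) | r < Metric.infDist z Mᶜ}) :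
    (∀ (f : EuclideanSpace ℝ (Fin N) → ℝ) (L : ℝ), 0 ≤ L →
      (∀ a ∈ M, ∀ b ∈ M, |f a - f b| ≤ L * nn (a - b)) →
      ∀ x ∈ Mr, DifferentiableAt ℝ (fun x' => ∫ y, η (x' - y) * f y) x) ∧
    (∀ ε : ℝ, 0 < ε → ∃ δ : ℝ, 0 < δ ∧
      ∀ (f : EuclideanSpace ℝ (Fin N) → ℝ) (L : ℝ), 0 ≤ L →
        (∀ a ∈ M, ∀ b ∈ M, |f a - f b| ≤ L * nn (a - b)) →
        ∀ x ∈ Mr, ∀ h : EuclideanSpace ℝ (Fin N), nn h ≤ δ → x + h ∈ Mr →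
          |(∫ y, η (x + h - y) * f y) - (∫ y, η (x - y) * f y) -
              fderiv ℝ (fun x' => ∫ y, η (x' - y) * f y) x h|
            ≤ ε * L * nn h) := by
  have hMr_open : IsOpen Mr := by
    rw [hMr]
    exact isOpen_lt continuous_const (continuous_infDist_pt _)
  have hball : ∀ x' ∈ Mr, closedBall x' r ⊆ M := by
    intro x' hx' y hy
    by_contra hyM
    have h1 : Metric.infDist x' Mᶜ ≤ dist x' y := infDist_le_dist_of_mem hyM
    rw [hMr] at hx'
    simp only [Set.mem_setOf_eq] at hx'
    rw [mem_closedBall, dist_comm] at hy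
    linarith
  obtain ⟨C, hC, hCle⟩ := aux_nn_upper nn nn_add nn_smul
  obtain ⟨c, hc, hcle⟩ := aux_nn_lower hN nn nn_add nn_smul nn_eq_zero
  set V := (volume (closedBall (0:EuclideanSpace ℝ (Fin N)) (r+1))).toReal with hV
  have hV0 : 0 ≤ V := ENNReal.toReal_nonneg
  have hmain : ∀ (f : EuclideanSpace ℝ (Fin N) → ℝ) (L : ℝ), 0 ≤ L →
      (∀ a ∈ M, ∀ b ∈ M, |f a - f b| ≤ L * nn (a - b)) →
      ∃ F : EuclideanSpace ℝ (Fin N) → ℝ, Continuous F ∧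
        (∀ a b : EuclideanSpace ℝ (Fin N), |F a - F b| ≤ (L * C) * ‖a - b‖) ∧
        (∀ x' ∈ Mr, (∫ y, η (x' - y) * f y) = ∫ y, η (x' - y) * F y) ∧
        (∀ x ∈ Mr, DifferentiableAt ℝ (fun x' => ∫ y, η (x' - y) * f y) x ∧
          ∀ h : EuclideanSpace ℝ (Fin N),
            fderiv ℝ (fun x' => ∫ y, η (x' - y) * f y) x h
              = ∫ y, fderiv ℝ η (x - y) h * F y) := by
    intro f L hL hLip
    have hKnn : 0 ≤ L * C := by positivity
    have hlipon : LipschitzOnWith (L*C).toNNReal f M := by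
      rw [lipschitzOnWith_iff_dist_le_mul]
      intro a ha b hb
      calc dist (f a) (f b) = |f a - f b| := Real.dist_eq _ _
        _ ≤ L * nn (a - b) := hLip a ha b hb
        _ ≤ L * (C * ‖a - b‖) := mul_le_mul_of_nonneg_left (hCle _) hL
        _ = (L*C) * dist a b := by rw [dist_eq_norm]; ring
        _ = ((L*C).toNNReal : ℝ) * dist a b := by rw [Real.coe_toNNReal _ hKnn]
    obtain ⟨F, hFlip, hFeq⟩ := hlipon.extend_real
    have hFcont : Continuous F := hFlip.continuous
    have hFbound : ∀ a b : EuclideanSpace ℝ (Fin N), |F a - F b| ≤ (L * C) * ‖a - b‖ := by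
      intro a b
      have h1 := hFlip.dist_le_mul a b
      rw [Real.dist_eq, dist_eq_norm, Real.coe_toNNReal _ hKnn] at h1
      exact h1
    have heqint : ∀ x' ∈ Mr, (∫ y, η (x' - y) * f y) = ∫ y, η (x' - y) * F y := by
      intro x' hx'
      apply integral_congr_ae
      filter_upwards with y
      rcases eq_or_ne (η (x' - y)) 0 with h0 | h0
      · rw [h0, zero_mul, zero_mul]
      · have hy : x' - y ∈ tsupport η := subset_tsupport η h0
        have hr' : ‖x' - y‖ ≤ r := by
          have := hηsupp hy
          rwa [mem_closedBall, dist_zero_right] at this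
        have hyM : y ∈ M := hball x' hx'
          (by rw [mem_closedBall, dist_comm, dist_eq_norm]; exact hr')
        rw [hFeq hyM]
    have conv_eq : ∀ x' : EuclideanSpace ℝ (Fin N),
        convolution η F (ContinuousLinearMap.mul ℝ ℝ) volume x' = ∫ y, η (x' - y) * F y := by
      intro x'
      rw [convolution_def]
      rw [← integral_sub_left_eq_self (fun y => η (x' - y) * F y) volume x']
      apply integral_congr_ae
      filter_upwards with t
      simp [sub_sub_cancel]
    refine ⟨F, hFcont, hFbound, heqint, ?_⟩
    intro x hx
    have hconv := hηcpt.hasFDerivAt_convolution_left (μ := volume) (ContinuousLinearMap.mul ℝ ℝ)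
      hηC1 (hFcont.locallyIntegrable) x
    have hev : (fun x' => ∫ y, η (x' - y) * f y)
        =ᶠ[nhds x] convolution η F (ContinuousLinearMap.mul ℝ ℝ) volume := by
      filter_upwards [hMr_open.mem_nhds hx] with x' hx'
      rw [heqint x' hx', conv_eq x']
    have hfd : HasFDerivAt (fun x' => ∫ y, η (x' - y) * f y)
        (convolution (fderiv ℝ η) F
          ((ContinuousLinearMap.mul ℝ ℝ).precompL (EuclideanSpace ℝ (Fin N))) volume x) x :=
      hconv.congr_of_eventuallyEq hev
    refine ⟨hfd.differentiableAt, ?_⟩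
    intro h
    rw [hfd.fderiv]
    -- compute the applied derivative
    set P := (ContinuousLinearMap.mul ℝ ℝ).precompL (EuclideanSpace ℝ (Fin N)) with hP
    have hDcont : Continuous (fderiv ℝ η) := hηC1.continuous_fderiv one_ne_zero
    have hint : Integrable (fun t : EuclideanSpace ℝ (Fin N) =>
        P (fderiv ℝ η t) (F (x - t))) volume := by
      apply Continuous.integrable_of_hasCompactSupport
      · exact (P.continuous.comp hDcont).clm_apply
          (hFcont.comp (continuous_const.sub continuous_id))
      · apply HasCompactSupport.intro hηcpt
        intro t ht
        have hz : fderiv ℝ η t = 0 := by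
          by_contra hne
          exact ht (support_fderiv_subset ℝ hne)
        rw [hz]
        simp
    rw [convolution_def, ContinuousLinearMap.integral_apply hint]
    rw [← integral_sub_left_eq_self (fun y => fderiv ℝ η (x - y) h * F y) volume x]
    apply integral_congr_ae
    filter_upwards with t
    simp [hP, sub_sub_cancel]
  constructor
  · intro f L hL hLip x hx
    obtain ⟨F, _, _, _, hdiff⟩ := hmain f L hL hLip
    exact (hdiff x hx).1
  · intro ε hε
    have hden : 0 < C * (r+1) * V + 1 := by positivity
    set ε'' := ε * c / (C * (r+1) * V + 1) with hε''def
    have hε'' : 0 < ε'' := by positivity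
    obtain ⟨δ', hδ'pos, hδ'le1, hkey⟩ := aux_key hr hηC1 hηcpt hηsupp hε''
    refine ⟨c * δ', by positivity, ?_⟩
    intro f L hL hLip x hx h hnh hxh
    obtain ⟨F, hFcont, hFbound, heqint, hdiff⟩ := hmain f L hL hLip
    have hhn : ‖h‖ ≤ δ' := by
      have h1 : c * ‖h‖ ≤ c * δ' := le_trans (hcle h) hnh
      exact le_of_mul_le_mul_left h1 hc
    rw [heqint (x+h) hxh, heqint x hx, (hdiff x hx).2 h]
    have hb := hkey (L*C) (by positivity) F hFcont hFbound x h hhn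
    have h1 : ε'' * (C*(r+1)*V) ≤ ε * c := by
      have heq : ε'' * (C*(r+1)*V + 1) = ε * c := by
        rw [hε''def]; field_simp
      nlinarith [hε''.le]
    calc |(∫ y, η (x + h - y) * F y) - (∫ y, η (x - y) * F y) -
          ∫ y, fderiv ℝ η (x - y) h * F y|
        ≤ ε'' * ‖h‖ * ((L*C)*(r+1)) * V := hb
      _ = (ε'' * (C*(r+1)*V)) * (L * ‖h‖) := by ring
      _ ≤ (ε * c) * (L * ‖h‖) :=
          mul_le_mul_of_nonneg_right h1 (mul_nonneg hL (norm_nonneg _))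
      _ = (ε * L) * (c * ‖h‖) := by ring
      _ ≤ (ε * L) * nn h := mul_le_mul_of_nonneg_left (hcle h) (mul_nonneg hε.le hL)
      _ = ε * L * nn h := by ring
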